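/- Let χ be a real Dirichlet character modulo q (i.e. all values of χ lie in ℝ). Then for every integer n ≥ 1 one has a_n(χ) := ∑_{m ∣ n, m squarefree} χ(n/m) ≥ 0, and a_1(χ) = 1. -/
import Mathlib

open scoped ComplexOrder

private lemma real_pm_one (r : ℝ) (n : ℕ) (hn : n ≠ 0) (h : r ^ n = 1) : r = 1 ∨ r = -1 := by
  have h1 : |r| ^ n = 1 := by rw [← abs_pow, h, abs_one]
  have habs : |r| = 1 := by
    rcases lt_trichotomy |r| 1 with hlt | he | hgt
    · exact absurd h1 (ne_of_lt (pow_lt_one₀ (abs_nonneg r) hlt hn))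
    · exact he
    · exact absurd h1 (ne_of_gt (one_lt_pow₀ hgt hn))
  exact (abs_eq (by norm_num : (0:ℝ) ≤ 1)).mp habs

private lemma chi_val {q : ℕ} (χ : DirichletCharacter ℂ q)
    (hreal : ∀ n : ZMod q, ∃ r : ℝ, χ n = (r : ℂ)) (x : ZMod q) :
    χ x = 0 ∨ χ x = 1 ∨ χ x = -1 := by
  by_cases hx : IsUnit x
  · right
    obtain ⟨u, rfl⟩ := hx
    obtain ⟨n, hn0, hun⟩ : ∃ n : ℕ, n ≠ 0 ∧ u ^ n = 1 := by
      rcases Nat.eq_zero_or_pos q with rfl | hq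
      · exact ⟨2, two_ne_zero, Int.units_sq u⟩
      · haveI : NeZero q := ⟨hq.ne'⟩
        exact ⟨Fintype.card (ZMod q)ˣ, Fintype.card_ne_zero, pow_card_eq_one⟩
    obtain ⟨r, hr⟩ := hreal u
    have hpow : χ ↑u ^ n = 1 := by
      rw [← map_pow, ← Units.val_pow_eq_pow_val, hun, Units.val_one, map_one]
    rw [hr] at hpow ⊢
    have hrn : r ^ n = 1 := by exact_mod_cast hpow
    rcases real_pm_one r n hn0 hrn with h | h <;> simp [h]
  · exact Or.inl (χ.map_nonunit hx)

private noncomputable def sqf : ArithmeticFunction ℂ :=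
  ⟨fun n => if Squarefree n then 1 else 0, by simp [not_squarefree_zero]⟩

private lemma sqf_mult : sqf.IsMultiplicative := by
  constructor
  · simp [sqf, squarefree_one]
  · intro m n h
    simp only [sqf, ArithmeticFunction.coe_mk]
    by_cases hm : Squarefree m <;> by_cases hn : Squarefree n <;>
      simp [Nat.squarefree_mul h, hm, hn]

private noncomputable def chiF {q : ℕ} (χ : DirichletCharacter ℂ q) : ArithmeticFunction ℂ :=
  ⟨fun n => if n = 0 then 0 else χ n, by simp⟩

private lemma chiF_mult {q : ℕ} (χ : DirichletCharacter ℂ q) : (chiF χ).IsMultiplicative := by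
  constructor
  · simp [chiF]
  · intro m n _
    simp only [chiF, ArithmeticFunction.coe_mk]
    rcases eq_or_ne m 0 with rfl | hm
    · simp
    rcases eq_or_ne n 0 with rfl | hn
    · simp
    rw [if_neg (by positivity), if_neg hm, if_neg hn]
    push_cast
    exact map_mul χ _ _

private lemma F_eq {q : ℕ} (χ : DirichletCharacter ℂ q) {n : ℕ} (hn : n ≠ 0) :
    (sqf * chiF χ) n = ∑ m ∈ n.divisors.filter Squarefree, χ ((n / m : ℕ) : ZMod q) := by
  rw [ArithmeticFunction.mul_apply, Nat.sum_divisorsAntidiagonal (fun a b => sqf a * chiF χ b),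
    Finset.sum_filter]
  refine Finset.sum_congr rfl fun m hm => ?_
  have hmd : m ∣ n := (Nat.mem_divisors.mp hm).1
  have hdiv : n / m ≠ 0 := by
    have := Nat.div_pos (Nat.le_of_dvd (Nat.pos_of_ne_zero hn) hmd)
      (Nat.pos_of_dvd_of_pos hmd (Nat.pos_of_ne_zero hn))
    omega
  simp only [sqf, chiF, ArithmeticFunction.coe_mk, if_neg hdiv]
  by_cases hs : Squarefree m <;> simp [hs]

private lemma filter_sqf_prime_pow {p k : ℕ} (hp : p.Prime) (hk : k ≠ 0) :
    (p ^ k).divisors.filter Squarefree = {1, p} := by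
  ext m
  simp only [Finset.mem_filter, Nat.mem_divisors, Finset.mem_insert, Finset.mem_singleton]
  constructor
  · rintro ⟨⟨hd, -⟩, hs⟩
    obtain ⟨i, hik, rfl⟩ := (Nat.dvd_prime_pow hp).mp hd
    have hi1 : i ≤ 1 := by
      by_contra hgt
      push_neg at hgt
      have hdd : p * p ∣ p ^ i := by
        have h2 : p ^ 2 ∣ p ^ i := pow_dvd_pow p hgt
        simpa [sq] using h2
      exact hp.one_lt.ne' (Nat.isUnit_iff.mp (hs p hdd))
    interval_cases i
    · exact Or.inl (pow_zero p)
    · exact Or.inr (pow_one p)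
  · rintro (rfl | rfl)
    · exact ⟨⟨one_dvd _, pow_ne_zero _ hp.pos.ne'⟩, squarefree_one⟩
    · exact ⟨⟨dvd_pow_self _ hk, pow_ne_zero _ hp.pos.ne'⟩, hp.squarefree⟩

private lemma coeffA_pp_nonneg {q : ℕ} (χ : DirichletCharacter ℂ q)
    (hreal : ∀ n : ZMod q, ∃ r : ℝ, χ n = (r : ℂ)) {p k : ℕ} (hp : p.Prime) (hk : k ≠ 0) :
    0 ≤ ∑ m ∈ (p ^ k).divisors.filter Squarefree, χ (((p ^ k) / m : ℕ) : ZMod q) := by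
  obtain ⟨r, hr⟩ := hreal ((p : ℕ) : ZMod q)
  have hr3 : r = 0 ∨ r = 1 ∨ r = -1 := by
    rcases chi_val χ hreal ((p : ℕ) : ZMod q) with h | h | h
    · exact Or.inl (by rw [hr] at h; exact_mod_cast h)
    · exact Or.inr (Or.inl (by rw [hr] at h; exact_mod_cast h))
    · exact Or.inr (Or.inr (by rw [hr] at h; exact_mod_cast h))
  have hc : ∀ j : ℕ, χ (((p ^ j : ℕ)) : ZMod q) = ((r ^ j : ℝ) : ℂ) := by
    intro j
    push_cast
    rw [map_pow, hr]
  rw [filter_sqf_prime_pow hp hk,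
    Finset.sum_insert (Finset.notMem_singleton.mpr hp.one_lt.ne : (1 : ℕ) ∉ ({p} : Finset ℕ)),
    Finset.sum_singleton, Nat.div_one,
    show p ^ k / p = p ^ (k - 1) by
      have h := Nat.pow_div (m := k) (n := 1) (Nat.one_le_iff_ne_zero.mpr hk) hp.pos
      simpa using h,
    hc k, hc (k - 1), ← Complex.ofReal_add, Complex.zero_le_real]
  obtain ⟨j, rfl⟩ : ∃ j, k = j + 1 := ⟨k - 1, (Nat.succ_pred_eq_of_pos (Nat.pos_of_ne_zero hk)).symm⟩
  simp only [Nat.add_sub_cancel]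
  rcases hr3 with rfl | rfl | rfl
  · simpa [pow_succ] using pow_nonneg (le_refl (0 : ℝ)) j
  · norm_num
  · have h : (-1 : ℝ) ^ (j + 1) + (-1) ^ j = 0 := by rw [pow_succ]; ring
    rw [h]

open scoped ComplexOrder

/-- The Dirichlet series coefficients of `ζ(s)L(s,χ)/ζ(2s)`:
`a_n(χ) = ∑_{m ∣ n, m squarefree} χ(n/m)`. -/
noncomputable def coeffA {q : ℕ} (χ : DirichletCharacter ℂ q) (n : ℕ) : ℂ :=
  ∑ m ∈ n.divisors.filter Squarefree, χ ((n / m : ℕ) : ZMod q)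

/-- If `χ` is a real Dirichlet character modulo `q`, then for every `n ≥ 1`
the coefficient `a_n(χ) = ∑_{m ∣ n, m squarefree} χ(n/m)` is nonnegative, and `a_1(χ) = 1`. -/
theorem coeffA_nonneg_and_one
    (q : ℕ) (χ : DirichletCharacter ℂ q) (hreal : ∀ n : ZMod q, ∃ r : ℝ, χ n = (r : ℂ)) :
    (∀ n : ℕ, 1 ≤ n → 0 ≤ coeffA χ n) ∧ coeffA χ 1 = 1 := by
  constructor
  · intro n hn
    have hn0 : n ≠ 0 := by omega
    have hF := sqf_mult.mul (chiF_mult χ)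
    rw [show coeffA χ n = (sqf * chiF χ) n from (F_eq χ hn0).symm,
      hF.multiplicative_factorization _ hn0]
    refine Finset.prod_nonneg fun p hp => ?_
    show 0 ≤ (sqf * chiF χ) (p ^ n.factorization p)
    have hpp : p.Prime := Nat.prime_of_mem_primeFactors (by
      simpa [Nat.support_factorization] using hp)
    have hk : n.factorization p ≠ 0 := Finsupp.mem_support_iff.mp hp
    rw [F_eq χ (pow_ne_zero _ hpp.pos.ne')]
    exact coeffA_pp_nonneg χ hreal hpp hk
  · norm_num [coeffA, Nat.divisors_one, Finset.filter_singleton, squarefree_one]
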